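/- Suppose a family of finite-time extinction probabilities for a multitype branching process satisfies: (i) S is partitioned into S₁ = {i : P_{e_i}(‖Y_t‖=0) > 0 for all t > 0} and S₂ = {i : there exists T_i > 0 with P_{e_i}(‖Y_t‖=0) = 0 for t < T_i and > 0 for t > T_i}; (ii) the Markov and branching properties hold. Then S₂ = ∅; i.e., for every type i and every t > 0, P_{e_i}(‖Y_t‖ = 0) > 0. -/

import Mathlib

open MeasureTheory
open scoped ENNReal

/-- The unit mass of type `i`. -/
noncomputable def unitMass (ℓ : ℕ) (i : Fin ℓ) : Fin ℓ → NNReal :=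
  fun m => if m = i then 1 else 0

noncomputable def single (ℓ : ℕ) (j : Fin ℓ) (a : NNReal) : Fin ℓ → NNReal :=
  fun m => if m = j then a else 0


lemma add_preimage (ℓ : ℕ) :
    (fun p : (Fin ℓ → NNReal) × (Fin ℓ → NNReal) => p.1 + p.2) ⁻¹' {0}
      = ({0} : Set (Fin ℓ → NNReal)) ×ˢ ({0} : Set (Fin ℓ → NNReal)) := by
  ext p
  simp only [Set.mem_preimage, Set.mem_singleton_iff, Set.mem_prod, funext_iff]
  constructor
  · intro h
    constructor <;> intro m <;> have := h m <;>
      simp only [Pi.add_apply, Pi.zero_apply, add_eq_zero] at this <;> simp [this.1, this.2]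
  · rintro ⟨h1, h2⟩ m
    simp [h1 m, h2 m]

lemma mul_ext' (ℓ : ℕ) (κ : (Fin ℓ → NNReal) → ℝ → Measure (Fin ℓ → NNReal))
    (hprob : ∀ y t, 0 ≤ t → IsProbabilityMeasure (κ y t))
    (hbranch : ∀ y y' t, 0 ≤ t →
      κ (y + y') t = ((κ y t).prod (κ y' t)).map (fun p => p.1 + p.2))
    (y y' : Fin ℓ → NNReal) (t : ℝ) (ht : 0 ≤ t) :
    κ (y + y') t {0} = κ y t {0} * κ y' t {0} := by
  haveI := hprob y t ht
  haveI := hprob y' t ht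
  rw [hbranch y y' t ht,
    Measure.map_apply (by exact measurable_fst.add measurable_snd : Measurable (fun p : (Fin ℓ → NNReal) × (Fin ℓ → NNReal) => p.1 + p.2)) (measurableSet_singleton 0),
    add_preimage, Measure.prod_prod]


lemma zero_ext' (ℓ : ℕ) (κ : (Fin ℓ → NNReal) → ℝ → Measure (Fin ℓ → NNReal))
    (hprob : ∀ y t, 0 ≤ t → IsProbabilityMeasure (κ y t))
    (hbranch : ∀ y y' t, 0 ≤ t →
      κ (y + y') t = ((κ y t).prod (κ y' t)).map (fun p => p.1 + p.2))
    (t : ℝ) (ht : 0 ≤ t) : κ 0 t {0} = 1 := by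
  haveI := hprob 0 t ht
  set μ := κ 0 t with hμ
  set F : (Fin ℓ → NNReal) → ℝ≥0∞ :=
    fun z => ENNReal.ofReal (Real.exp (-(∑ j, (z j : ℝ)))) with hFdef
  have hF : Measurable F := by
    apply Measurable.ennreal_ofReal
    apply Real.measurable_exp.comp
    apply Measurable.neg
    exact Finset.measurable_sum _ fun j _ => (measurable_pi_apply j).coe_nnreal_real
  have hself : μ = (μ.prod μ).map (fun p => p.1 + p.2) := by
    have := hbranch 0 0 t ht
    simpa using this
  set I := ∫⁻ z, F z ∂μ with hIdef
  have hImul : I = I * I := by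
    conv_lhs => rw [hIdef, hself]
    rw [lintegral_map hF (by exact measurable_fst.add measurable_snd : Measurable (fun p : (Fin ℓ → NNReal) × (Fin ℓ → NNReal) => p.1 + p.2))]
    have hpt : ∀ p : (Fin ℓ → NNReal) × (Fin ℓ → NNReal),
        F (p.1 + p.2) = F p.1 * F p.2 := by
      intro p
      simp only [hFdef, Pi.add_apply]
      rw [← ENNReal.ofReal_mul (Real.exp_nonneg _), ← Real.exp_add]
      · congr 1
        push_cast
        rw [Finset.sum_add_distrib]
        ring_nf
    simp only [hpt]
    rw [lintegral_prod_mul hF.aemeasurable hF.aemeasurable]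
  have hIle : I ≤ 1 := by
    rw [hIdef]
    calc ∫⁻ z, F z ∂μ ≤ ∫⁻ _, 1 ∂μ := by
          apply lintegral_mono
          intro z
          simp only [hFdef]
          apply ENNReal.ofReal_le_one.mpr
          apply Real.exp_le_one_iff.mpr
          simp
          positivity
      _ = 1 := by simp
  have hIpos : 0 < I := by
    rw [hIdef, lintegral_pos_iff_support hF]
    have : Function.support F = Set.univ := by
      ext z
      simp only [Function.mem_support, Set.mem_univ, iff_true, hFdef]
      positivity
    rw [this]
    simp
  have hI1 : I = 1 := by
    have hnetop : I ≠ ∞ := (lt_of_le_of_lt hIle (by norm_num)).ne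
    have hx : I.toReal = I.toReal * I.toReal := by
      conv_lhs => rw [hImul]
      rw [ENNReal.toReal_mul]
    have hxpos : 0 < I.toReal := ENNReal.toReal_pos hIpos.ne' hnetop
    have hx1 : I.toReal = 1 := by nlinarith
    have : I = ENNReal.ofReal I.toReal := (ENNReal.ofReal_toReal hnetop).symm
    rw [this, hx1]
    simp
  -- now conclude F = 1 a.e., hence measure concentrated on 0
  have hsub : ∫⁻ z, (1 - F z) ∂μ = 0 := by
    rw [lintegral_sub hF (by rw [← hIdef, hI1]; norm_num)
      (Filter.Eventually.of_forall fun z => ?_)]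
    · rw [← hIdef, hI1]
      simp
    · simp only [hFdef]
      apply le_trans (ENNReal.ofReal_le_one.mpr ?_) le_rfl
      apply Real.exp_le_one_iff.mpr
      simp; positivity
  have hae : μ {z | ¬((1 : ℝ≥0∞) - F z = 0)} = 0 := by
    have := (lintegral_eq_zero_iff (measurable_const.sub hF)).mp hsub
    exact this
  have hsubset : {z : Fin ℓ → NNReal | z ≠ 0} ⊆ {z | ¬((1 : ℝ≥0∞) - F z = 0)} := by
    intro z hz
    simp only [Set.mem_setOf_eq] at hz ⊢
    have hzpos : 0 < ∑ j, (z j : ℝ) := by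
      obtain ⟨j, hj⟩ : ∃ j, z j ≠ 0 := by
        by_contra h
        push_neg at h
        exact hz (funext fun j => h j)
      apply Finset.sum_pos' (fun j _ => by positivity)
      exact ⟨j, Finset.mem_univ j, by positivity⟩
    have : F z < 1 := by
      simp only [hFdef]
      rw [show (1 : ℝ≥0∞) = ENNReal.ofReal 1 by simp]
      apply ENNReal.ofReal_lt_ofReal_iff_of_nonneg (Real.exp_nonneg _) |>.mpr
      apply Real.exp_lt_one_iff.mpr
      linarith
    intro h
    rw [tsub_eq_zero_iff_le] at h
    exact absurd (lt_of_lt_of_le this h) (lt_irrefl _)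
  have hcompl : μ ({0}ᶜ : Set (Fin ℓ → NNReal)) = 0 := by
    apply measure_mono_null _ hae
    intro z hz
    exact hsubset hz
  have := measure_compl (μ := μ) (measurableSet_singleton 0) (measure_ne_top _ _)
  rw [hcompl] at this
  have huniv : μ Set.univ = 1 := measure_univ
  rw [huniv] at this
  have h1le : (1 : ℝ≥0∞) ≤ μ {0} := tsub_eq_zero_iff_le.mp this.symm
  exact le_antisymm (le_trans (measure_mono (Set.subset_univ _)) huniv.le) h1le


section
variable (ℓ : ℕ) (κ : (Fin ℓ → NNReal) → ℝ → Measure (Fin ℓ → NNReal))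
  (hprob : ∀ y t, 0 ≤ t → IsProbabilityMeasure (κ y t))
  (hmul : ∀ y y' (t : ℝ), 0 ≤ t → κ (y + y') t {0} = κ y t {0} * κ y' t {0})
  (hzero : ∀ t : ℝ, 0 ≤ t → κ 0 t {0} = 1)

include hmul hzero in
lemma sum_ext_gen (t : ℝ) (ht : 0 ≤ t) (z : Fin ℓ → NNReal) (F : Finset (Fin ℓ)) :
    κ (∑ j ∈ F, single ℓ j (z j)) t {0} = ∏ j ∈ F, κ (single ℓ j (z j)) t {0} := by
  classical
  induction F using Finset.induction with
  | empty => simpa using hzero t ht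
  | insert a s hj ih =>
    rw [Finset.sum_insert hj, Finset.prod_insert hj, hmul _ _ t ht, ih]

include hmul hzero in
lemma sum_ext (t : ℝ) (ht : 0 ≤ t) (z : Fin ℓ → NNReal) :
    κ z t {0} = ∏ j, κ (single ℓ j (z j)) t {0} := by
  have h := sum_ext_gen ℓ κ hmul hzero t ht z Finset.univ
  have hzz : (∑ j, single ℓ j (z j)) = z := by
    funext m
    simp [single, Finset.sum_apply, Finset.sum_ite_eq]
  rw [hzz] at h
  exact h

include hmul hzero in
lemma pow_ext (t : ℝ) (ht : 0 ≤ t) (j : Fin ℓ) (a : NNReal) (n : ℕ) :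
    κ (single ℓ j ((n : NNReal) * a)) t {0} = κ (single ℓ j a) t {0} ^ n := by
  induction n with
  | zero =>
    simp only [Nat.cast_zero, zero_mul, pow_zero]
    have : single ℓ j 0 = 0 := by funext m; simp [single]
    rw [this]
    exact hzero t ht
  | succ n ih =>
    have hsplit : single ℓ j ((↑(n+1) : NNReal) * a)
        = single ℓ j ((n : NNReal) * a) + single ℓ j a := by
      funext m
      simp only [single, Pi.add_apply]
      split
      · push_cast; ring
      · simp
    rw [hsplit, hmul _ _ t ht, ih, pow_succ]

include hprob hmul in
lemma mono_mass (t : ℝ) (ht : 0 ≤ t) (j : Fin ℓ) (a b : NNReal) (hab : a ≤ b) :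
    κ (single ℓ j b) t {0} ≤ κ (single ℓ j a) t {0} := by
  have hsplit : single ℓ j b = single ℓ j a + single ℓ j (b - a) := by
    funext m
    simp only [single, Pi.add_apply]
    split
    · rw [add_tsub_cancel_of_le hab]
    · simp
  rw [hsplit, hmul _ _ t ht]
  haveI := hprob (single ℓ j (b - a)) t ht
  calc κ (single ℓ j a) t {0} * κ (single ℓ j (b - a)) t {0}
      ≤ κ (single ℓ j a) t {0} * 1 := by
        apply mul_le_mul_right (prob_le_one)
    _ = _ := mul_one _

end

theorem stmt_15 (ℓ : ℕ)
    -- `κ y t` is the law at time `t` of the multitype branching process started from `y`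
    (κ : (Fin ℓ → NNReal) → ℝ → Measure (Fin ℓ → NNReal))
    (hprob : ∀ y t, 0 ≤ t → IsProbabilityMeasure (κ y t))
    -- Markov (Chapman–Kolmogorov) property
    (hmarkov : ∀ y s t, 0 ≤ s → 0 ≤ t → ∀ A : Set (Fin ℓ → NNReal), MeasurableSet A →
      κ y (s + t) A = ∫⁻ z, κ z t A ∂(κ y s))
    -- branching property
    (hbranch : ∀ y y' t, 0 ≤ t →
      κ (y + y') t = ((κ y t).prod (κ y' t)).map (fun p => p.1 + p.2))
    -- (i): every type belongs to `S₁` or to `S₂`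
    (hpartition : ∀ i : Fin ℓ,
      (∀ t, 0 < t → 0 < κ (unitMass ℓ i) t {0}) ∨
      (∃ T, 0 < T ∧ (∀ t, 0 < t → t < T → κ (unitMass ℓ i) t {0} = 0) ∧
        (∀ t, T < t → 0 < κ (unitMass ℓ i) t {0}))) :
    -- conclusion: `S₂ = ∅`, i.e. extinction by time `t` has positive probability for all `t > 0`
    ∀ i : Fin ℓ, ∀ t, 0 < t → 0 < κ (unitMass ℓ i) t {0} := by
  classical
  have hmul := mul_ext' ℓ κ hprob hbranch
  have hzero := zero_ext' ℓ κ hprob hbranch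
  -- the predicate "type j is in S₁"
  set P : Fin ℓ → Prop := fun j => ∀ s, 0 < s → 0 < κ (unitMass ℓ j) s {0} with hP
  intro i t ht
  by_cases hi : P i
  · exact hi t ht
  exfalso
  have hthr : ∀ j, ¬ P j →
      ∃ T, 0 < T ∧ (∀ s, 0 < s → s < T → κ (unitMass ℓ j) s {0} = 0) ∧
        (∀ s, T < s → 0 < κ (unitMass ℓ j) s {0}) :=
    fun j hj => (hpartition j).resolve_left hj
  -- choose thresholds
  set Tfun : Fin ℓ → ℝ := fun j => if h : P j then 1 else (hthr j h).choose with hTfun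
  have hTfun_spec : ∀ j (hj : ¬ P j), 0 < Tfun j ∧
      (∀ s, 0 < s → s < Tfun j → κ (unitMass ℓ j) s {0} = 0) ∧
      (∀ s, Tfun j < s → 0 < κ (unitMass ℓ j) s {0}) := by
    intro j hj
    have : Tfun j = (hthr j hj).choose := by rw [hTfun]; exact dif_neg hj
    rw [this]
    exact (hthr j hj).choose_spec
  -- minimal threshold
  set S₂f : Finset (Fin ℓ) := Finset.univ.filter (fun j => ¬ P j) with hS₂f
  have hne : S₂f.Nonempty := ⟨i, by simp [hS₂f, hi]⟩
  obtain ⟨i₀, hi₀mem, hi₀min⟩ := S₂f.exists_min_image Tfun hne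
  have hi₀ : ¬ P i₀ := by simpa [hS₂f] using hi₀mem
  set T := Tfun i₀ with hT
  obtain ⟨hTpos, hTzeroI, hTposI⟩ := hTfun_spec i₀ hi₀
  have hTmin : ∀ j, ¬ P j → T ≤ Tfun j := by
    intro j hj
    exact hi₀min j (by simp [hS₂f, hj])
  -- times
  set s0 : ℝ := 3 * T / 5 with hs0
  set t₁ : ℝ := 3 * T / 10 with ht₁
  set t₂ : ℝ := 3 * T / 5 with ht₂
  have hs0pos : 0 < s0 := by rw [hs0]; linarith
  have ht₁pos : 0 < t₁ := by rw [ht₁]; linarith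
  have ht₂pos : 0 < t₂ := by rw [ht₂]; linarith
  have ht₁T : t₁ < T := by rw [ht₁]; linarith
  have ht₂T : t₂ < T := by rw [ht₂]; linarith
  set μ := κ (unitMass ℓ i₀) s0 with hμ
  -- E1
  have E1 : ∫⁻ z, κ z t₁ {0} ∂μ = 0 := by
    rw [← hmarkov _ _ _ hs0pos.le ht₁pos.le {0} (measurableSet_singleton 0)]
    exact hTzeroI _ (by linarith) (by rw [hs0, ht₁]; linarith)
  have E2 : 0 < ∫⁻ z, κ z t₂ {0} ∂μ := by
    rw [← hmarkov _ _ _ hs0pos.le ht₂pos.le {0} (measurableSet_singleton 0)]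
    exact hTposI _ (by rw [hs0, ht₂]; linarith)
  -- for j not in S₁, extinction prob at small times vanishes
  have fS2 : ∀ j, ¬ P j → ∀ s, 0 < s → s < T → κ (unitMass ℓ j) s {0} = 0 := by
    intro j hj s hs hsT
    exact (hTfun_spec j hj).2.1 s hs (lt_of_lt_of_le hsT (hTmin j hj))
  -- scalar masses: positivity transfers
  have hscalar_pos : ∀ (j : Fin ℓ) (a : NNReal) (s : ℝ), 0 < s → a ≠ 0 →
      0 < κ (single ℓ j a) s {0} → 0 < κ (unitMass ℓ j) s {0} := by
    intro j a s hs ha hpos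
    obtain ⟨n, hn⟩ := exists_nat_gt (a⁻¹ : NNReal)
    have hna : 1 ≤ (n : NNReal) * a := by
      have h1 : a⁻¹ * a = 1 := inv_mul_cancel₀ ha
      calc (1 : NNReal) = a⁻¹ * a := h1.symm
        _ ≤ (n : NNReal) * a := mul_le_mul_left hn.le a
    have h1 : κ (single ℓ j 1) s {0} = κ (unitMass ℓ j) s {0} := by
      congr 1
    have h2 : κ (single ℓ j ((n : NNReal) * a)) s {0} ≤ κ (single ℓ j 1) s {0} :=
      mono_mass ℓ κ hprob hmul s hs.le j 1 _ hna
    have h3 : κ (single ℓ j ((n : NNReal) * a)) s {0} = κ (single ℓ j a) s {0} ^ n :=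
      pow_ext ℓ κ hmul hzero s hs.le j a n
    have h4 : 0 < κ (single ℓ j a) s {0} ^ n := ENNReal.pow_pos hpos n
    rw [← h1]
    exact lt_of_lt_of_le (h3 ▸ h4) h2
  -- scalar masses: positivity transfers down
  have hscalar_pos' : ∀ (j : Fin ℓ) (a : NNReal) (s : ℝ), 0 < s →
      0 < κ (unitMass ℓ j) s {0} → 0 < κ (single ℓ j a) s {0} := by
    intro j a s hs hpos
    obtain ⟨n, hn⟩ := exists_nat_gt a
    have hna : a ≤ (n : NNReal) * 1 := by rw [mul_one]; exact hn.le
    have h2 : κ (single ℓ j ((n : NNReal) * 1)) s {0} ≤ κ (single ℓ j a) s {0} :=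
      mono_mass ℓ κ hprob hmul s hs.le j a _ hna
    have h3 : κ (single ℓ j ((n : NNReal) * 1)) s {0} = κ (single ℓ j 1) s {0} ^ n :=
      pow_ext ℓ κ hmul hzero s hs.le j 1 n
    have h1 : κ (single ℓ j 1) s {0} = κ (unitMass ℓ j) s {0} := by congr 1
    calc (0 : ℝ≥0∞) < κ (unitMass ℓ j) s {0} ^ n := ENNReal.pow_pos hpos n
      _ = κ (single ℓ j ((n : NNReal) * 1)) s {0} := by rw [h3, h1]
      _ ≤ κ (single ℓ j a) s {0} := h2
  -- the measurable set M
  set M : Set (Fin ℓ → NNReal) := {z | ∀ j, ¬ P j → z j = 0} with hM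
  have hMmeas : MeasurableSet M := by
    have hrw : M = ⋂ j, (if P j then Set.univ else ((fun z : Fin ℓ → NNReal => z j) ⁻¹' {0})) := by
      ext z
      simp only [hM, Set.mem_setOf_eq, Set.mem_iInter]
      constructor
      · intro h j
        by_cases hj : P j
        · rw [if_pos hj]; trivial
        · rw [if_neg hj]; exact h j hj
      · intro h j hj
        have := h j
        rw [if_neg hj] at this
        exact this
    rw [hrw]
    apply MeasurableSet.iInter
    intro j
    by_cases hj : P j
    · rw [if_pos hj]; exact MeasurableSet.univ
    · rw [if_neg hj]; exact (measurable_pi_apply j) (measurableSet_singleton 0)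
  -- the measurable minorant h
  set h : (Fin ℓ → NNReal) → ℝ≥0∞ := fun z =>
    ∏ j, (if P j then κ (unitMass ℓ j) t₁ {0} ^ (Nat.ceil (z j)) else 1) with hh
  have hhmeas : Measurable h := by
    apply Finset.measurable_prod
    intro j _
    by_cases hj : P j
    · simp only [if_pos hj]
      have hanti : Antitone (fun x : NNReal => κ (unitMass ℓ j) t₁ {0} ^ (Nat.ceil x)) := by
        intro x y hxy
        haveI := hprob (unitMass ℓ j) t₁ ht₁pos.le
        exact pow_le_pow_right_of_le_one' prob_le_one (Nat.ceil_le_ceil hxy)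
      exact hanti.measurable.comp (measurable_pi_apply j)
    · simp only [if_neg hj]
      exact measurable_const
  -- h is below extinction prob at t₁ on M
  have hlow : ∀ z ∈ M, h z ≤ κ z t₁ {0} := by
    intro z hzM
    rw [sum_ext ℓ κ hmul hzero t₁ ht₁pos.le z, hh]
    apply Finset.prod_le_prod'
    intro j _
    by_cases hj : P j
    · rw [if_pos hj]
      have hle : z j ≤ ((Nat.ceil (z j) : ℕ) : NNReal) := Nat.le_ceil _
      calc κ (unitMass ℓ j) t₁ {0} ^ (Nat.ceil (z j))
          = κ (single ℓ j 1) t₁ {0} ^ (Nat.ceil (z j)) := by congr 1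
        _ = κ (single ℓ j ((Nat.ceil (z j) : NNReal) * 1)) t₁ {0} :=
            (pow_ext ℓ κ hmul hzero t₁ ht₁pos.le j 1 _).symm
        _ ≤ κ (single ℓ j (z j)) t₁ {0} := by
            apply mono_mass ℓ κ hprob hmul t₁ ht₁pos.le j (z j)
            rw [mul_one]; exact hle
    · rw [if_neg hj]
      have hz0 : z j = 0 := hzM j hj
      have : single ℓ j (z j) = 0 := by
        funext m; simp [single, hz0]
      rw [this, hzero t₁ ht₁pos.le]
  -- h is positive on M
  have hpos_on_M : ∀ z ∈ M, 0 < h z := by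
    intro z _
    rw [hh]
    apply CanonicallyOrderedAdd.prod_pos.mpr
    intro j _
    by_cases hj : P j
    · rw [if_pos hj]
      exact ENNReal.pow_pos (hj t₁ ht₁pos) _
    · rw [if_neg hj]; norm_num
  -- μ M = 0
  have hMnull : μ M = 0 := by
    have hint : ∫⁻ z, M.indicator h z ∂μ = 0 := by
      apply le_antisymm _ (zero_le)
      rw [← E1]
      apply lintegral_mono
      intro z
      by_cases hz : z ∈ M
      · rw [Set.indicator_of_mem hz]; exact hlow z hz
      · rw [Set.indicator_of_notMem hz]; exact zero_le
    have hae := (lintegral_eq_zero_iff (hhmeas.indicator hMmeas)).mp hint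
    have : μ {z | M.indicator h z ≠ 0} = 0 := by
      have := hae
      rw [Filter.EventuallyEq, ae_iff] at this
      simpa using this
    apply measure_mono_null _ this
    intro z hz
    simp only [Set.mem_setOf_eq]
    rw [Set.indicator_of_mem hz]
    exact (hpos_on_M z hz).ne'
  -- extinction at t₂ vanishes off M
  have hvanish : ∀ z, z ∉ M → κ z t₂ {0} = 0 := by
    intro z hz
    simp only [hM, Set.mem_setOf_eq, not_forall] at hz
    obtain ⟨j, hj, hzj⟩ := hz
    -- κ z t₂ {0} ≤ κ (single j (z j)) t₂ {0}
    have hb : κ z t₂ {0} ≤ κ (single ℓ j (z j)) t₂ {0} := by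
      rw [sum_ext ℓ κ hmul hzero t₂ ht₂pos.le z]
      rw [← Finset.mul_prod_erase Finset.univ _ (Finset.mem_univ j)]
      calc κ (single ℓ j (z j)) t₂ {0} * ∏ m ∈ Finset.univ.erase j, κ (single ℓ m (z m)) t₂ {0}
          ≤ κ (single ℓ j (z j)) t₂ {0} * 1 := by
            apply mul_le_mul_right
            apply Finset.prod_le_one
            · intro m _; exact zero_le
            · intro m _
              haveI := hprob (single ℓ m (z m)) t₂ ht₂pos.le
              exact prob_le_one
        _ = κ (single ℓ j (z j)) t₂ {0} := mul_one _
    have hzero2 : κ (single ℓ j (z j)) t₂ {0} = 0 := by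
      by_contra hne0
      have hpos2 : 0 < κ (single ℓ j (z j)) t₂ {0} := pos_iff_ne_zero.mpr hne0
      have := hscalar_pos j (z j) t₂ ht₂pos hzj hpos2
      rw [fS2 j hj t₂ ht₂pos ht₂T] at this
      exact lt_irrefl _ this
    exact le_antisymm (le_trans hb (le_of_eq hzero2)) (zero_le)
  -- contradiction
  have : ∫⁻ z, κ z t₂ {0} ∂μ = 0 := by
    apply le_antisymm _ (zero_le)
    calc ∫⁻ z, κ z t₂ {0} ∂μ ≤ ∫⁻ z, M.indicator (fun _ => (∞ : ℝ≥0∞)) z ∂μ := by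
          apply lintegral_mono
          intro z
          by_cases hz : z ∈ M
          · simp only [Set.indicator_of_mem hz]; exact le_top
          · simp only [Set.indicator_of_notMem hz, hvanish z hz]; exact le_rfl
      _ = ∞ * μ M := lintegral_indicator_const hMmeas ∞
      _ = 0 := by rw [hMnull, mul_zero]
  rw [this] at E2
  exact lt_irrefl _ E2
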